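/- Let a ∈ ℝ, b ≥ 0 and ν a positive Borel measure on ℝ with ∫ dν(t)/(1+t²) < ∞, and define q(ζ) = a + b·ζ + ∫ (1/(t-ζ) - t/(1+t²)) dν(t) for ζ ∈ ℂ \ ℝ. Then q is analytic on ℂ \ ℝ, satisfies q(conj ζ) = conj(q(ζ)), and Im q(ζ) ≥ 0 for Im ζ > 0. -/

import Mathlib

open Complex MeasureTheory ComplexConjugate Metric

private lemma one_add_sq_ne (t : ℝ) : (1 : ℂ) + (t : ℂ) ^ 2 ≠ 0 := by
  have h : (1 : ℂ) + (t : ℂ) ^ 2 = ((1 + t ^ 2 : ℝ) : ℂ) := by push_cast; ring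
  rw [h]
  exact_mod_cast (by positivity : (1 : ℝ) + t ^ 2 ≠ 0)

private lemma sub_ne (t : ℝ) {ζ : ℂ} (hζ : ζ.im ≠ 0) : (t : ℂ) - ζ ≠ 0 := by
  intro h
  apply hζ
  have := congrArg Complex.im h
  simpa using this.symm

private lemma abs_sub_ge (t : ℝ) (ζ : ℂ) : |ζ.im| ≤ ‖(t : ℂ) - ζ‖ := by
  have := Complex.abs_im_le_norm ((t : ℂ) - ζ)
  simpa using this

private lemma integrand_meas (ν : Measure ℝ) (ζ : ℂ) :
    AEStronglyMeasurable (fun t : ℝ => 1 / ((t : ℂ) - ζ) - (t : ℂ) / (1 + (t : ℂ) ^ 2)) ν := by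
  apply Measurable.aestronglyMeasurable
  fun_prop

private lemma integrand_integrable (ν : Measure ℝ)
    (hν : Integrable (fun t : ℝ => 1 / (1 + t ^ 2)) ν) {ζ : ℂ} (hζ : ζ.im ≠ 0) :
    Integrable (fun t : ℝ => 1 / ((t : ℂ) - ζ) - (t : ℂ) / (1 + (t : ℂ) ^ 2)) ν := by
  have him : (0 : ℝ) < |ζ.im| := abs_pos.mpr hζ
  set C : ℝ := ‖ζ‖ + ‖1 + ζ ^ 2‖ / |ζ.im| with hC
  refine Integrable.mono (hν.const_mul C) (integrand_meas ν ζ) (ae_of_all _ fun t => ?_)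
  have htz : (t : ℂ) - ζ ≠ 0 := sub_ne t hζ
  have h1 : (1 : ℂ) + (t : ℂ) ^ 2 ≠ 0 := one_add_sq_ne t
  have key : 1 / ((t : ℂ) - ζ) - (t : ℂ) / (1 + (t : ℂ) ^ 2)
      = (ζ + (1 + ζ ^ 2) / ((t : ℂ) - ζ)) / (1 + (t : ℂ) ^ 2) := by
    field_simp
    ring
  rw [key]
  have habs : ‖1 + (t : ℂ) ^ 2‖ = 1 + t ^ 2 := by
    have h : (1 : ℂ) + (t : ℂ) ^ 2 = ((1 + t ^ 2 : ℝ) : ℂ) := by push_cast; ring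
    rw [h, Complex.norm_real, Real.norm_eq_abs, abs_of_pos (by positivity)]
  have hnum : ‖ζ + (1 + ζ ^ 2) / ((t : ℂ) - ζ)‖ ≤ C := by
    refine (norm_add_le _ _).trans ?_
    rw [hC]
    gcongr
    rw [norm_div]
    exact div_le_div_of_nonneg_left (by positivity) him (abs_sub_ge t ζ)
  have hpos : (0 : ℝ) < 1 + t ^ 2 := by positivity
  have hCnn : 0 ≤ C := le_trans (by positivity) hnum
  calc ‖(ζ + (1 + ζ ^ 2) / ((t : ℂ) - ζ)) / (1 + (t : ℂ) ^ 2)‖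
      = ‖ζ + (1 + ζ ^ 2) / ((t : ℂ) - ζ)‖ / (1 + t ^ 2) := by
        rw [norm_div, habs]
    _ ≤ C / (1 + t ^ 2) := by gcongr
    _ ≤ ‖C * (1 / (1 + t ^ 2))‖ := by
        rw [Real.norm_eq_abs, mul_one_div]
        exact le_abs_self _

private lemma hasDerivAt_integral (ν : Measure ℝ)
    (hν : Integrable (fun t : ℝ => 1 / (1 + t ^ 2)) ν) {ζ₀ : ℂ} (hζ₀ : ζ₀.im ≠ 0) :
    HasDerivAt (fun ζ : ℂ => ∫ t : ℝ, (1 / ((t : ℂ) - ζ) - (t : ℂ) / (1 + (t : ℂ) ^ 2)) ∂ν)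
      (∫ t : ℝ, (1 / ((t : ℂ) - ζ₀) ^ 2) ∂ν) ζ₀ := by
  set ε : ℝ := |ζ₀.im| / 2 with hε
  have hεpos : 0 < ε := by
    have : 0 < |ζ₀.im| := abs_pos.mpr hζ₀
    positivity
  set R : ℝ := ‖ζ₀‖ + ε with hR
  set c : ℝ := (1 + 2 * R ^ 2) / ε ^ 2 with hc
  have hc0 : 0 ≤ c := by positivity
  have hcε : c * ε ^ 2 = 1 + 2 * R ^ 2 := div_mul_cancel₀ _ (by positivity)
  -- facts about ζ in the ball
  have hball : ∀ ζ ∈ ball ζ₀ ε, ε ≤ |ζ.im| ∧ |ζ.re| ≤ R := by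
    intro ζ hζ
    rw [mem_ball, Complex.dist_eq] at hζ
    have him : |ζ.im - ζ₀.im| ≤ ‖ζ - ζ₀‖ := by
      simpa using Complex.abs_im_le_norm (ζ - ζ₀)
    have hre : |ζ.re - ζ₀.re| ≤ ‖ζ - ζ₀‖ := by
      simpa using Complex.abs_re_le_norm (ζ - ζ₀)
    constructor
    · have h1 : |ζ₀.im| - |ζ.im| ≤ |ζ.im - ζ₀.im| := by
        have := abs_sub_abs_le_abs_sub ζ₀.im ζ.im
        rwa [abs_sub_comm] at this
      have := lt_of_le_of_lt him hζ
      linarith [abs_abs_sub_abs_le_abs_sub ζ.im ζ₀.im]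
    · have h2 : |ζ₀.re| ≤ ‖ζ₀‖ := Complex.abs_re_le_norm ζ₀
      have := lt_of_le_of_lt hre hζ
      have h3 : |ζ.re| ≤ |ζ.re - ζ₀.re| + |ζ₀.re| := by
        calc |ζ.re| = |ζ.re - ζ₀.re + ζ₀.re| := by ring_nf
          _ ≤ |ζ.re - ζ₀.re| + |ζ₀.re| := abs_add_le _ _
      rw [hR]; linarith
  have hmemball : ∀ ζ ∈ ball ζ₀ ε, ζ.im ≠ 0 := by
    intro ζ hζ
    have := (hball ζ hζ).1
    intro h0
    rw [h0] at this
    simp at this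
    linarith
  have main := hasDerivAt_integral_of_dominated_loc_of_deriv_le
    (F := fun (ζ : ℂ) (t : ℝ) => 1 / ((t : ℂ) - ζ) - (t : ℂ) / (1 + (t : ℂ) ^ 2))
    (F' := fun (ζ : ℂ) (t : ℝ) => 1 / ((t : ℂ) - ζ) ^ 2)
    (bound := fun t : ℝ => (c + 2) * (1 / (1 + t ^ 2)))
    (ball_mem_nhds ζ₀ hεpos)
    (Filter.Eventually.of_forall fun ζ => integrand_meas ν ζ)
    (integrand_integrable ν hν hζ₀)
    (by apply Measurable.aestronglyMeasurable; fun_prop)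
    ?_ ((hν.const_mul (c + 2))) ?_
  · exact main.2
  · -- bound
    refine ae_of_all _ fun t ζ hζ => ?_
    obtain ⟨him, hre⟩ := hball ζ hζ
    have hz : (t : ℂ) - ζ ≠ 0 := sub_ne t (hmemball ζ hζ)
    have hnormsq : ‖(t : ℂ) - ζ‖ ^ 2 = (t - ζ.re) ^ 2 + ζ.im ^ 2 := by
      rw [Complex.sq_norm, Complex.normSq_apply]
      simp
      ring
    have habs : ‖1 / ((t : ℂ) - ζ) ^ 2‖ = 1 / ((t - ζ.re) ^ 2 + ζ.im ^ 2) := by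
      rw [norm_div, norm_one, norm_pow, hnormsq]
    rw [habs]
    have hy2 : ε ^ 2 ≤ ζ.im ^ 2 := by
      have h := pow_le_pow_left₀ hεpos.le him 2
      rwa [_root_.sq_abs] at h
    have hx2 : ζ.re ^ 2 ≤ R ^ 2 := by
      have h := pow_le_pow_left₀ (abs_nonneg ζ.re) hre 2
      rwa [_root_.sq_abs] at h
    have hA : (0 : ℝ) < (t - ζ.re) ^ 2 + ζ.im ^ 2 := by
      have : 0 < ε ^ 2 := by positivity
      nlinarith [sq_nonneg (t - ζ.re)]
    show 1 / ((t - ζ.re) ^ 2 + ζ.im ^ 2) ≤ (c + 2) * (1 / (1 + t ^ 2))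
    rw [mul_one_div, div_le_div_iff₀ hA (by positivity)]
    nlinarith [mul_nonneg hc0 (sub_nonneg.2 hy2), sq_nonneg (t - ζ.re), hcε,
      sq_nonneg (t - 2 * ζ.re), mul_nonneg hc0 (sq_nonneg (t - ζ.re))]
  · -- derivative
    refine ae_of_all _ fun t ζ hζ => ?_
    have hz : (t : ℂ) - ζ ≠ 0 := sub_ne t (hmemball ζ hζ)
    have h1 : HasDerivAt (fun ζ : ℂ => (t : ℂ) - ζ) (-1) ζ := by
      simpa using (hasDerivAt_id ζ).const_sub (t : ℂ)
    have h2 := (h1.inv hz).sub_const ((t : ℂ) / (1 + (t : ℂ) ^ 2))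
    simpa [one_div] using h2

/-- The integral formula `q(ζ) = a + bζ + ∫ (1/(t-ζ) - t/(1+t²)) dν(t)` with `a ∈ ℝ`,
`b ≥ 0`, and `ν` a positive Borel measure with `∫ dν/(1+t²) < ∞`, defines a function that is
analytic on `ℂ \ ℝ`, satisfies `q(ζ̄) = conj (q ζ)`, and has `Im q ≥ 0` on `ℂ⁺`. -/
theorem integral_formula_is_herglotz (a b : ℝ) (hb : 0 ≤ b) (ν : Measure ℝ)
    (hν : Integrable (fun t : ℝ => 1 / (1 + t ^ 2)) ν)
    (q : ℂ → ℂ)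
    (hq : ∀ ζ : ℂ, q ζ = (a : ℂ) + (b : ℂ) * ζ
      + ∫ t : ℝ, (1 / ((t : ℂ) - ζ) - (t : ℂ) / (1 + (t : ℂ) ^ 2)) ∂ν) :
    AnalyticOnNhd ℂ q {z : ℂ | z.im ≠ 0} ∧
    (∀ ζ : ℂ, ζ.im ≠ 0 → q (conj ζ) = conj (q ζ)) ∧
    (∀ ζ : ℂ, 0 < ζ.im → 0 ≤ (q ζ).im) := by
  have hqe : q = fun ζ : ℂ => (a : ℂ) + (b : ℂ) * ζ
      + ∫ t : ℝ, (1 / ((t : ℂ) - ζ) - (t : ℂ) / (1 + (t : ℂ) ^ 2)) ∂ν := funext hq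
  refine ⟨?_, ?_, ?_⟩
  · -- analyticity
    have hopen : IsOpen {z : ℂ | z.im ≠ 0} :=
      isOpen_ne.preimage Complex.continuous_im
    refine DifferentiableOn.analyticOnNhd (fun ζ₀ hζ₀ => ?_) hopen
    have hd : DifferentiableAt ℂ q ζ₀ := by
      rw [hqe]
      apply DifferentiableAt.add
      · exact (differentiableAt_const _).add ((differentiableAt_const _).mul differentiableAt_id)
      · exact (hasDerivAt_integral ν hν hζ₀).differentiableAt
    exact hd.differentiableWithinAt
  · -- conjugation symmetry
    intro ζ hζ
    have hpt : ∀ t : ℝ, (starRingEnd ℂ) (1 / ((t : ℂ) - ζ) - (t : ℂ) / (1 + (t : ℂ) ^ 2))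
        = 1 / ((t : ℂ) - (starRingEnd ℂ) ζ) - (t : ℂ) / (1 + (t : ℂ) ^ 2) := by
      intro t
      simp [map_sub, map_div₀, Complex.conj_ofReal]
    rw [hq, hq, map_add, map_add, map_mul, Complex.conj_ofReal, Complex.conj_ofReal,
      ← integral_conj]
    simp_rw [hpt]
  · -- positivity of imaginary part
    intro ζ hζ
    rw [hq]
    have hint := integrand_integrable ν hν (ne_of_gt hζ)
    have him : (∫ t : ℝ, (1 / ((t : ℂ) - ζ) - (t : ℂ) / (1 + (t : ℂ) ^ 2)) ∂ν).im
        = ∫ t : ℝ, (1 / ((t : ℂ) - ζ) - (t : ℂ) / (1 + (t : ℂ) ^ 2)).im ∂ν := by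
      have h := integral_im (𝕜 := ℂ) hint
      simpa [RCLike.im_to_complex] using h.symm
    simp only [Complex.add_im, Complex.mul_im, Complex.ofReal_re, Complex.ofReal_im,
      zero_mul, add_zero, mul_zero, zero_add]
    rw [him]
    have hintim : 0 ≤ ∫ t : ℝ, (1 / ((t : ℂ) - ζ) - (t : ℂ) / (1 + (t : ℂ) ^ 2)).im ∂ν := by
      refine integral_nonneg fun t => ?_
      have h2 : ((t : ℂ) / (1 + (t : ℂ) ^ 2)).im = 0 := by
        have : (t : ℂ) / (1 + (t : ℂ) ^ 2) = ((t / (1 + t ^ 2) : ℝ) : ℂ) := by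
          push_cast; ring
        rw [this, Complex.ofReal_im]
      have h1 : 0 ≤ (1 / ((t : ℂ) - ζ)).im := by
        have heq : (1 / ((t : ℂ) - ζ)).im = ζ.im / Complex.normSq ((t : ℂ) - ζ) := by
          rw [one_div, Complex.inv_im]
          simp [Complex.sub_im]
        rw [heq]
        exact div_nonneg hζ.le (Complex.normSq_nonneg _)
      simp only [Complex.sub_im, h2, sub_zero]
      exact h1
    have : 0 ≤ b * ζ.im := mul_nonneg hb (le_of_lt hζ)
    linarith
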